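/- The number of equivalence classes of binary LCD [n,1] codes equals n/2 if n is even and (n+1)/2 if n is odd. -/

import Mathlib

open Matrix Finset

def dualCode {F : Type*} [Field F] {n : ℕ} (C : Submodule F (Fin n → F)) :
    Submodule F (Fin n → F) where
  carrier := {x | ∀ y ∈ C, ∑ i, x i * y i = 0}
  zero_mem' := by intro y hy; simp
  add_mem' := by
    intro a b ha hb y hy
    have h1 := ha y hy; have h2 := hb y hy
    simp [add_mul, Finset.sum_add_distrib, h1, h2]
  smul_mem' := by
    intro c a ha y hy
    have h1 := ha y hy
    simp [smul_eq_mul, mul_assoc, ← Finset.mul_sum, h1]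

def IsLCD {F : Type*} [Field F] {n : ℕ} (C : Submodule F (Fin n → F)) : Prop :=
  C ⊓ dualCode C = ⊥

open Classical in
noncomputable def wt {F : Type*} [Field F] {n : ℕ} (x : Fin n → F) : ℕ :=
  (Finset.univ.filter fun i => x i ≠ 0).card

def monoMap {F : Type*} [Field F] {n : ℕ} (σ : Equiv.Perm (Fin n)) (c : Fin n → F) :
    (Fin n → F) →ₗ[F] (Fin n → F) where
  toFun x := fun j => c j * x (σ j)
  map_add' := by intro a b; funext j; simp [mul_add]
  map_smul' := by intro r a; funext j; simp [smul_eq_mul]; ring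

def CodeEquiv {F : Type*} [Field F] {n : ℕ} (C C' : Submodule F (Fin n → F)) : Prop :=
  ∃ (σ : Equiv.Perm (Fin n)) (c : Fin n → F), (∀ i, c i ≠ 0) ∧ C' = C.map (monoMap σ c)

def extendZero (F : Type*) [Field F] (n : ℕ) : (Fin n → F) →ₗ[F] (Fin (n+1) → F) where
  toFun x := Fin.snoc x 0
  map_add' := by intro a b; funext j; refine Fin.lastCases ?_ ?_ j <;> simp
  map_smul' := by intro r a; funext j; refine Fin.lastCases ?_ ?_ j <;> simp

def hasMinWeight {F : Type*} [Field F] {n : ℕ} (C : Submodule F (Fin n → F)) (d : ℕ) : Prop :=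
  (∃ x ∈ C, x ≠ 0 ∧ wt x = d) ∧ ∀ x ∈ C, x ≠ 0 → d ≤ wt x

open Finset

section Aux
variable {n : ℕ}

lemma zmod2_cases (x : ZMod 2) : x = 0 ∨ x = 1 := by revert x; decide

lemma zmod2_mul_self (x : ZMod 2) : x * x = x := by revert x; decide

lemma wt_cast (x : Fin n → ZMod 2) : ((wt x : ℕ) : ZMod 2) = ∑ i, x i := by
  classical
  rw [wt, Finset.card_filter, Nat.cast_sum]
  apply Finset.sum_congr rfl
  intro i _
  by_cases h : x i = 0 <;> simp [h]
  · rcases zmod2_cases (x i) with h'|h' <;> simp [h'] at h ⊢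

lemma two_zmod2 : (2 : ZMod 2) = 0 := by decide

lemma odd_cast_one {w : ℕ} (h : Odd w) : ((w : ℕ) : ZMod 2) = 1 := by
  obtain ⟨k, rfl⟩ := h
  push_cast
  rw [show (2 : ZMod 2) * k + 1 = 2 * k + 1 from rfl, two_zmod2]
  ring

lemma even_cast_zero {w : ℕ} (h : Even w) : ((w : ℕ) : ZMod 2) = 0 := by
  obtain ⟨k, rfl⟩ := h
  push_cast
  have : (k : ZMod 2) + k = 2 * k := by ring
  rw [this, two_zmod2, zero_mul]

lemma zmod2_ne_zero {a : ZMod 2} (h : a ≠ 0) : a = 1 := by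
  rcases zmod2_cases a with h'|h'
  · exact absurd h' h
  · exact h'

lemma mem_span_zmod2 {x y : Fin n → ZMod 2} :
    y ∈ Submodule.span (ZMod 2) {x} ↔ y = 0 ∨ y = x := by
  rw [Submodule.mem_span_singleton]
  constructor
  · rintro ⟨a, rfl⟩; rcases zmod2_cases a with h|h <;> simp [h]
  · rintro (rfl|rfl)
    exacts [⟨0, by simp⟩, ⟨1, by simp⟩]

lemma isLCD_span_iff {x : Fin n → ZMod 2} (hx : x ≠ 0) :
    IsLCD (Submodule.span (ZMod 2) {x}) ↔ Odd (wt x) := by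
  have hxx : ∑ i, x i * x i = ((wt x : ℕ) : ZMod 2) := by
    rw [wt_cast]; exact Finset.sum_congr rfl fun i _ => zmod2_mul_self _
  constructor
  · intro h
    by_contra hodd
    have he : Even (wt x) := Nat.not_odd_iff_even.mp hodd
    have hxd : x ∈ dualCode (Submodule.span (ZMod 2) {x}) := by
      intro z hz
      rcases mem_span_zmod2.mp hz with rfl|rfl
      · simp
      · rw [hxx, even_cast_zero he]
    have : x ∈ (⊥ : Submodule (ZMod 2) (Fin n → ZMod 2)) := by
      rw [← h]; exact ⟨Submodule.mem_span_singleton_self x, hxd⟩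
    exact hx (by simpa using this)
  · intro h
    rw [IsLCD, eq_bot_iff]
    rintro y ⟨hy1, hy2⟩
    rcases mem_span_zmod2.mp hy1 with rfl|rfl
    · simp
    · have := hy2 y (Submodule.mem_span_singleton_self y)
      rw [hxx, odd_cast_one h] at this
      exact absurd this one_ne_zero

lemma exists_gen {C : Submodule (ZMod 2) (Fin n → ZMod 2)}
    (h : Module.finrank (ZMod 2) C = 1) :
    ∃ x : Fin n → ZMod 2, x ≠ 0 ∧ C = Submodule.span (ZMod 2) {x} := by
  obtain ⟨v, hv0, hv⟩ := finrank_eq_one_iff'.mp h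
  refine ⟨(v : Fin n → ZMod 2), by simpa using hv0, le_antisymm ?_ ?_⟩
  · intro w hw
    obtain ⟨c, hc⟩ := hv ⟨w, hw⟩
    have : c • (v : Fin n → ZMod 2) = w := congrArg Subtype.val hc
    rw [← this]
    exact Submodule.smul_mem _ _ (Submodule.mem_span_singleton_self _)
  · rw [Submodule.span_le]
    simpa using v.2

lemma gen_unique {C : Submodule (ZMod 2) (Fin n → ZMod 2)}
    (h : Module.finrank (ZMod 2) C = 1) {x y : Fin n → ZMod 2}
    (hx : x ∈ C) (hy : y ∈ C) (hx0 : x ≠ 0) (hy0 : y ≠ 0) : x = y := by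
  obtain ⟨v, hv0, hC⟩ := exists_gen h
  rw [hC] at hx hy
  rcases mem_span_zmod2.mp hx with rfl|rfl
  · exact absurd rfl hx0
  rcases mem_span_zmod2.mp hy with rfl|rfl
  · exact absurd rfl hy0
  rfl

lemma monoMap_eq (σ : Equiv.Perm (Fin n)) {c : Fin n → ZMod 2} (hc : ∀ i, c i ≠ 0)
    (x : Fin n → ZMod 2) : monoMap σ c x = fun j => x (σ j) := by
  funext j
  have : c j = 1 := zmod2_ne_zero (hc j)
  show c j * x (σ j) = x (σ j)
  rw [this, one_mul]

lemma wt_perm (σ : Equiv.Perm (Fin n)) (x : Fin n → ZMod 2) :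
    wt (fun j => x (σ j)) = wt x := by
  unfold wt
  apply Finset.card_bij (fun j _ => σ j) ?_ ?_ ?_
  · intro a ha
    simp only [Finset.mem_filter, Finset.mem_univ, true_and] at ha ⊢
    exact ha
  · intro a _ b _ hab
    exact σ.injective hab
  · intro b hb
    simp only [Finset.mem_filter, Finset.mem_univ, true_and] at hb ⊢
    exact ⟨σ.symm b, by simpa using hb, by simp⟩

lemma perm_ne_zero (σ : Equiv.Perm (Fin n)) {x : Fin n → ZMod 2} (hx : x ≠ 0) :
    (fun j => x (σ j)) ≠ 0 := by
  intro h
  apply hx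
  funext i
  have := congrFun h (σ.symm i)
  simpa using this

lemma subtypeCongr_pos {p q : Fin n → Prop} [DecidablePred p] [DecidablePred q]
    (e : {j : Fin n // p j} ≃ {j // q j}) (e' : {j : Fin n // ¬ p j} ≃ {j // ¬ q j})
    (j : Fin n) (hj : p j) :
    Equiv.subtypeCongr e e' j = ((e ⟨j, hj⟩ : {j // q j}) : Fin n) := by
  simp only [Equiv.subtypeCongr, Equiv.trans_apply, Equiv.sumCompl_symm_apply_of_pos hj,
    Equiv.sumCongr_apply, Sum.map_inl, Equiv.sumCompl_apply_inl]

lemma subtypeCongr_neg {p q : Fin n → Prop} [DecidablePred p] [DecidablePred q]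
    (e : {j : Fin n // p j} ≃ {j // q j}) (e' : {j : Fin n // ¬ p j} ≃ {j // ¬ q j})
    (j : Fin n) (hj : ¬ p j) :
    Equiv.subtypeCongr e e' j = ((e' ⟨j, hj⟩ : {j // ¬ q j}) : Fin n) := by
  simp only [Equiv.subtypeCongr, Equiv.trans_apply, Equiv.sumCompl_symm_apply_of_neg hj,
    Equiv.sumCongr_apply, Sum.map_inr, Equiv.sumCompl_apply_inr]

lemma card_support_eq_wt (x : Fin n → ZMod 2) :
    Fintype.card {j // x j ≠ 0} = wt x := by
  rw [Fintype.card_subtype, wt]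
  congr 1
  ext i
  simp

lemma exists_perm {x y : Fin n → ZMod 2} (h : wt x = wt y) :
    ∃ σ : Equiv.Perm (Fin n), y = fun j => x (σ j) := by
  have hcard : Fintype.card {j // y j ≠ 0} = Fintype.card {j // x j ≠ 0} := by
    rw [card_support_eq_wt, card_support_eq_wt, h]
  have hcard' : Fintype.card {j // ¬ y j ≠ 0} = Fintype.card {j // ¬ x j ≠ 0} := by
    rw [Fintype.card_subtype_compl (fun j => y j ≠ 0),
      Fintype.card_subtype_compl (fun j => x j ≠ 0), hcard]
  let e : {j // y j ≠ 0} ≃ {j // x j ≠ 0} := Fintype.equivOfCardEq hcard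
  let e' : {j // ¬ y j ≠ 0} ≃ {j // ¬ x j ≠ 0} := Fintype.equivOfCardEq hcard'
  refine ⟨Equiv.subtypeCongr e e', funext fun j => ?_⟩
  by_cases hj : y j ≠ 0
  · rw [subtypeCongr_pos e e' j hj, zmod2_ne_zero hj, zmod2_ne_zero (e ⟨j, hj⟩).2]
  · rw [subtypeCongr_neg e e' j hj, not_not.mp hj, not_not.mp (e' ⟨j, hj⟩).2]

lemma codeEquiv_span {x y : Fin n → ZMod 2} (hx : x ≠ 0) (hy : y ≠ 0)
    (h : wt x = wt y) :
    CodeEquiv (Submodule.span (ZMod 2) {x}) (Submodule.span (ZMod 2) {y}) := by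
  obtain ⟨σ, hσ⟩ := exists_perm h
  refine ⟨σ, 1, fun i => one_ne_zero, ?_⟩
  rw [Submodule.map_span, Set.image_singleton]
  congr 1
  rw [monoMap_eq (c := 1) σ (fun i => one_ne_zero) x, ← hσ]

def vecw (n w : ℕ) : Fin n → ZMod 2 := fun i => if (i : ℕ) < w then 1 else 0

lemma wt_vecw {w : ℕ} (hw : w ≤ n) : wt (vecw n w) = w := by
  classical
  rw [wt, Finset.filter_congr_decidable]
  have h1 : (Finset.univ.filter fun i : Fin n => vecw n w i ≠ 0)
      = Finset.univ.filter fun i : Fin n => (i : ℕ) < w := by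
    apply Finset.filter_congr
    intro i _
    unfold vecw
    by_cases h : (i : ℕ) < w <;> simp [h]
  rw [h1]
  have h2 : (Finset.univ.filter fun i : Fin n => (i : ℕ) < w)
      = Finset.map (Fin.castLEEmb hw) Finset.univ := by
    ext i
    simp only [Finset.mem_filter, Finset.mem_univ, true_and, Finset.mem_map]
    constructor
    · intro hi
      exact ⟨⟨(i : ℕ), hi⟩, rfl⟩
    · rintro ⟨j, -, rfl⟩
      simpa using j.2
  rw [h2, Finset.card_map, Finset.card_univ, Fintype.card_fin]

lemma vecw_ne_zero {w : ℕ} (h1 : 1 ≤ w) (hw : w ≤ n) : vecw n w ≠ 0 := by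
  intro h
  have hn : 0 < n := lt_of_lt_of_le h1 hw
  have := congrFun h ⟨0, hn⟩
  simp [vecw, h1] at this
  omega

end Aux
section Main
variable {n : ℕ}

noncomputable def G (C : {C : Submodule (ZMod 2) (Fin n → ZMod 2) //
    Module.finrank (ZMod 2) C = 1 ∧ IsLCD C}) : ℕ :=
  wt (Classical.choose (exists_gen C.2.1))

lemma G_eq (C : {C : Submodule (ZMod 2) (Fin n → ZMod 2) //
    Module.finrank (ZMod 2) C = 1 ∧ IsLCD C}) {y : Fin n → ZMod 2}
    (hy : y ∈ C.1) (hy0 : y ≠ 0) : G C = wt y := by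
  obtain ⟨h0, hsp⟩ := Classical.choose_spec (exists_gen C.2.1)
  have hx : Classical.choose (exists_gen C.2.1) ∈ C.1 := by
    have h := Submodule.mem_span_singleton_self (R := ZMod 2) (Classical.choose (exists_gen C.2.1))
    rwa [← hsp] at h
  rw [G, gen_unique C.2.1 hx hy h0 hy0]

lemma G_wellDef (C C' : {C : Submodule (ZMod 2) (Fin n → ZMod 2) //
    Module.finrank (ZMod 2) C = 1 ∧ IsLCD C}) (h : CodeEquiv C.1 C'.1) : G C = G C' := by
  obtain ⟨σ, c, hc, hmap⟩ := h
  obtain ⟨h0, hsp⟩ := Classical.choose_spec (exists_gen C.2.1)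
  set x := Classical.choose (exists_gen C.2.1) with hxdef
  have hx : x ∈ C.1 := by
    have h := Submodule.mem_span_singleton_self (R := ZMod 2) x
    rwa [← hsp] at h
  have hx' : monoMap σ c x ∈ C'.1 := by
    rw [hmap]; exact ⟨x, hx, rfl⟩
  rw [monoMap_eq σ hc x] at hx'
  have hne : (fun j => x (σ j)) ≠ 0 := perm_ne_zero σ h0
  have h1 : G C' = wt (fun j => x (σ j)) := G_eq C' hx' hne
  have h2 : G C = wt x := G_eq C hx h0
  rw [h1, h2, wt_perm]

lemma wt_le (x : Fin n → ZMod 2) : wt x ≤ n := by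
  rw [← card_support_eq_wt]
  simpa using Fintype.card_subtype_le (fun j => x j ≠ 0)

lemma card_odd_range (n : ℕ) :
    ((Finset.range (n+1)).filter (fun w => Odd w)).card = (n+1)/2 := by
  induction n with
  | zero => decide
  | succ m ih =>
    rw [Finset.range_add_one, Finset.filter_insert]
    by_cases h : Odd (m+1)
    · rw [if_pos h, Finset.card_insert_of_notMem (by simp), ih]
      have := Nat.odd_iff.mp h
      omega
    · rw [if_neg h, ih]
      have := Nat.even_iff.mp (Nat.not_odd_iff_even.mp h)
      omega

end Main
theorem stmt9 (n : ℕ) :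
    Nat.card (Quot fun (C C' : {C : Submodule (ZMod 2) (Fin n → ZMod 2) //
        Module.finrank (ZMod 2) C = 1 ∧ IsLCD C}) => CodeEquiv C.1 C'.1) =
      if Even n then n / 2 else (n + 1) / 2 := by
  classical
  set S : Finset ℕ := (Finset.range (n+1)).filter (fun w => Odd w) with hS
  have hmem : ∀ w ∈ S, Odd w ∧ w ≤ n := by
    intro w hw
    rw [hS, Finset.mem_filter, Finset.mem_range] at hw
    exact ⟨hw.2, by omega⟩
  -- properties of the canonical code for weight w
  have hprop : ∀ w : {w : ℕ // w ∈ S},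
      Module.finrank (ZMod 2) (Submodule.span (ZMod 2) {vecw n w.1}) = 1 ∧
      IsLCD (Submodule.span (ZMod 2) {vecw n w.1}) := by
    intro w
    obtain ⟨hodd, hle⟩ := hmem w.1 w.2
    have hne : vecw n w.1 ≠ 0 := vecw_ne_zero hodd.pos hle
    refine ⟨finrank_span_singleton hne, (isLCD_span_iff hne).mpr ?_⟩
    rw [wt_vecw hle]
    exact hodd
  set g : {w : ℕ // w ∈ S} →
      Quot fun (C C' : {C : Submodule (ZMod 2) (Fin n → ZMod 2) //
        Module.finrank (ZMod 2) C = 1 ∧ IsLCD C}) => CodeEquiv C.1 C'.1 :=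
    fun w => Quot.mk _ ⟨Submodule.span (ZMod 2) {vecw n w.1}, hprop w⟩ with hg
  have hGg : ∀ w : {w : ℕ // w ∈ S},
      Quot.lift G G_wellDef (g w) = w.1 := by
    intro w
    obtain ⟨hodd, hle⟩ := hmem w.1 w.2
    have hne : vecw n w.1 ≠ 0 := vecw_ne_zero hodd.pos hle
    show G _ = w.1
    rw [G_eq _ (Submodule.mem_span_singleton_self _) hne, wt_vecw hle]
  have hinj : Function.Injective g := by
    intro a b hab
    have := congrArg (Quot.lift G G_wellDef) hab
    rw [hGg a, hGg b] at this
    exact Subtype.ext this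
  have hsurj : Function.Surjective g := by
    intro q
    induction q using Quot.ind with
    | _ C =>
      obtain ⟨x, hx0, hsp⟩ := exists_gen C.2.1
      have hodd : Odd (wt x) := by
        have := C.2.2
        rw [hsp] at this
        exact (isLCD_span_iff hx0).mp this
      have hle : wt x ≤ n := wt_le x
      have hwS : wt x ∈ S := by
        rw [hS, Finset.mem_filter, Finset.mem_range]
        exact ⟨by omega, hodd⟩
      refine ⟨⟨wt x, hwS⟩, ?_⟩
      rw [hg]
      apply Quot.sound
      show CodeEquiv (Submodule.span (ZMod 2) {vecw n (wt x)}) C.1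
      rw [hsp]
      exact codeEquiv_span (vecw_ne_zero hodd.pos hle) hx0 (by rw [wt_vecw hle])
  have hcardeq : Nat.card (Quot fun (C C' : {C : Submodule (ZMod 2) (Fin n → ZMod 2) //
        Module.finrank (ZMod 2) C = 1 ∧ IsLCD C}) => CodeEquiv C.1 C'.1) = S.card := by
    rw [← Nat.card_eq_finsetCard]
    exact (Nat.card_congr (Equiv.ofBijective g ⟨hinj, hsurj⟩)).symm
  rw [hcardeq, hS, card_odd_range]
  rcases Nat.even_or_odd n with h | h
  · rw [if_pos h]
    obtain ⟨k, rfl⟩ := h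
    omega
  · rw [if_neg (Nat.not_even_iff_odd.mpr h)]
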